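/- arXiv:2504.20536 — 5 statements merged into one kernel-verified Lean document; each statement's English description precedes it below -/
import Mathlib

section
/- Let I be a finite nonempty set with n elements and let c, c' : I \u2192 \u211d be vectors with c i \u2265 0 and c' i \u2265 0 for all i and \u03a3_{i\u2208I} c i = \u03a3_{i\u2208I} c' i. Then there exists a sequence of at most n \u2212 1 pairwise transfers, each with a nonnegative amount, transforming c into c' such that every intermediate vector in the sequence is nonnegative in all coordinates. -/
/-- A pairwise transfer `(i, j, x)` on a vector `c : I → ℝ` decreases `c i`
by `x` and increases `c j` by `x`, leaving all other indices unchanged. -/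
def pairTransfer {I : Type*} [DecidableEq I] (c : I → ℝ) (t : I × I × ℝ) : I → ℝ :=
  fun k => c k - (if k = t.1 then t.2.2 else 0) + (if k = t.2.1 then t.2.2 else 0)

lemma aux_reachable {I : Type*} [DecidableEq I] (s : Finset I) :
    ∀ (c c' : I → ℝ), (∀ i, 0 ≤ c i) → (∀ i, 0 ≤ c' i) →
    (∀ i, i ∉ s → c i = c' i) → ∑ i ∈ s, c i = ∑ i ∈ s, c' i →
    ∃ ts : List (I × I × ℝ),
      ts.length ≤ s.card - 1 ∧
      (∀ t ∈ ts, t.1 ≠ t.2.1 ∧ 0 ≤ t.2.2) ∧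
      (∀ pre : List (I × I × ℝ), pre <+: ts →
        ∀ i : I, 0 ≤ (pre.foldl pairTransfer c) i) ∧
      ts.foldl pairTransfer c = c' := by
  induction s using Finset.strongInduction with
  | _ s ih =>
  intro c c' hc hc' hout hsum
  by_cases hcard : s.card ≤ 1
  · -- base: c = c'
    have hcc' : c = c' := by
      funext k
      by_cases hk : k ∈ s
      · have hs : s = {k} := by
          apply Finset.eq_singleton_iff_unique_mem.mpr
          exact ⟨hk, fun b hb => Finset.card_le_one.mp hcard b hb k hk⟩
        simpa [hs] using hsum
      · exact hout k hk
    refine ⟨[], by simp, by simp, ?_, by simpa using hcc'⟩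
    intro pre hpre
    have : pre = [] := List.prefix_nil.mp hpre
    simpa [this] using hc
  · push_neg at hcard
    have hne : s.Nonempty := Finset.card_pos.mp (by omega)
    obtain ⟨i, hi, hile⟩ : ∃ i ∈ s, c' i ≤ c i := by
      by_contra h
      push_neg at h
      exact absurd hsum (ne_of_lt (Finset.sum_lt_sum_of_nonempty hne h))
    obtain ⟨j, hj, hji⟩ := Finset.exists_mem_ne hcard i
    set x : ℝ := c i - c' i with hx
    set d : I → ℝ := pairTransfer c (i, j, x) with hd
    have hij : i ≠ j := fun h => hji h.symm
    have hdi : d i = c' i := by simp [hd, pairTransfer, hij, hx]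
    have hdj : d j = c j + x := by simp [hd, pairTransfer, hji]
    have hdk : ∀ k, k ≠ i → k ≠ j → d k = c k := by
      intro k hki hkj; simp [hd, pairTransfer, hki, hkj]
    have hx0 : 0 ≤ x := sub_nonneg.mpr hile
    have hd0 : ∀ k, 0 ≤ d k := by
      intro k
      by_cases hki : k = i
      · rw [hki, hdi]; exact hc' i
      · by_cases hkj : k = j
        · rw [hkj, hdj]; exact add_nonneg (hc j) hx0
        · rw [hdk k hki hkj]; exact hc k
    have hjei : j ∈ s.erase i := Finset.mem_erase.mpr ⟨hji, hj⟩
    have hsum' : ∑ k ∈ s.erase i, d k = ∑ k ∈ s.erase i, c' k := by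
      have h1 : ∑ k ∈ s.erase i, d k = d j + ∑ k ∈ (s.erase i).erase j, d k :=
        (Finset.add_sum_erase _ d hjei).symm
      have h2 : ∑ k ∈ s.erase i, c k = c j + ∑ k ∈ (s.erase i).erase j, c k :=
        (Finset.add_sum_erase _ c hjei).symm
      have h3 : ∑ k ∈ (s.erase i).erase j, d k = ∑ k ∈ (s.erase i).erase j, c k := by
        apply Finset.sum_congr rfl
        intro k hk
        simp only [Finset.mem_erase] at hk
        exact hdk k hk.2.1 hk.1
      have h4 : ∑ k ∈ s, c k = c i + ∑ k ∈ s.erase i, c k :=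
        (Finset.add_sum_erase _ c hi).symm
      have h5 : ∑ k ∈ s, c' k = c' i + ∑ k ∈ s.erase i, c' k :=
        (Finset.add_sum_erase _ c' hi).symm
      rw [h1, h3, hdj]
      have := hsum
      rw [h4, h5] at this
      rw [h2] at this
      linarith
    have hout' : ∀ k, k ∉ s.erase i → d k = c' k := by
      intro k hk
      by_cases hki : k = i
      · rw [hki]; exact hdi
      · have hks : k ∉ s := fun h => hk (Finset.mem_erase.mpr ⟨hki, h⟩)
        have hkj : k ≠ j := fun h => hks (h ▸ hj)
        rw [hdk k hki hkj]; exact hout k hks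
    obtain ⟨ts', hlen, hgood, hpre, hfold⟩ :=
      ih (s.erase i) (Finset.erase_ssubset hi) d c' hd0 hc' hout' hsum'
    refine ⟨(i, j, x) :: ts', ?_, ?_, ?_, ?_⟩
    · have hec : (s.erase i).card = s.card - 1 := Finset.card_erase_of_mem hi
      simp only [List.length_cons]
      omega
    · intro t ht
      rcases List.mem_cons.mp ht with h | h
      · rw [h]; exact ⟨hij, hx0⟩
      · exact hgood t h
    · intro pre hpreh k
      match pre with
      | [] => simpa using hc k
      | hd' :: tl =>
        obtain ⟨h1, h2⟩ := List.cons_prefix_cons.mp hpreh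
        rw [h1]
        simpa using hpre tl h2 k
    · simpa using hfold

/-- Any nonnegative vector `c'` with the same total as a nonnegative vector `c`
is reachable from `c` by at most `n - 1` pairwise transfers with nonnegative
amounts, keeping all intermediate vectors nonnegative. -/
theorem reachable_by_pairwise_transfers
    {I : Type*} [Fintype I] [DecidableEq I] [Nonempty I]
    (c c' : I → ℝ) (hc : ∀ i, 0 ≤ c i) (hc' : ∀ i, 0 ≤ c' i)
    (hsum : ∑ i : I, c i = ∑ i : I, c' i) :
    ∃ ts : List (I × I × ℝ),
      ts.length ≤ Fintype.card I - 1 ∧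
      (∀ t ∈ ts, t.1 ≠ t.2.1 ∧ 0 ≤ t.2.2) ∧
      (∀ pre : List (I × I × ℝ), pre <+: ts →
        ∀ i : I, 0 ≤ (pre.foldl pairTransfer c) i) ∧
      ts.foldl pairTransfer c = c' := by
  have := aux_reachable (Finset.univ : Finset I) c c' hc hc'
    (fun i hi => absurd (Finset.mem_univ i) hi) hsum
  simpa [Finset.card_univ] using this
end

section
/- Let G be a simple graph on a finite vertex set V and b\u2080 : V \u2192 \u211d with b\u2080 w \u2265 0 for all w. Suppose a finite sequence of bind-transfers is applied successively in which every intermediate balance vector is nonnegative in all coordinates, producing final balances b. Then for every vertex v, b v is at most the sum of b\u2080 over the connected component of v in G. In particular: (i) if some vertex outside the connected component of v has positive initial balance, then b v < \u03a3_{w\u2208V} b\u2080 w; and (ii) if G is a perfect matching (every vertex is incident to exactly one edge) and w is the vertex matched to v, then b v \u2264 b\u2080 v + b\u2080 w \u2264 2 \u00b7 max_{u\u2208V} b\u2080 u. -/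
/-- A bind-transfer `(u, v, x)` on a balance vector `b : V → ℝ` decreases
`b u` by `x` and increases `b v` by `x`, leaving all other vertices
unchanged. -/
def bindTransfer {V : Type*} [DecidableEq V] (b : V → ℝ) (t : V × V × ℝ) : V → ℝ :=
  fun k => b k - (if k = t.1 then t.2.2 else 0) + (if k = t.2.1 then t.2.2 else 0)

open scoped Classical

lemma compSum_step {V : Type*} [Fintype V] [DecidableEq V] (G : SimpleGraph V)
    (v : V) (b : V → ℝ) (t : V × V × ℝ) (h : G.Adj t.1 t.2.1) :
    ∑ w : V, (if G.Reachable v w then bindTransfer b t w else 0)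
      = ∑ w : V, if G.Reachable v w then b w else 0 := by
  have hr : G.Reachable v t.1 ↔ G.Reachable v t.2.1 :=
    ⟨fun hr => hr.trans h.reachable, fun hr => hr.trans h.symm.reachable⟩
  have key : ∀ w : V, (if G.Reachable v w then bindTransfer b t w else 0)
      = (if G.Reachable v w then b w else 0)
        - (if w = t.1 then (if G.Reachable v t.1 then t.2.2 else 0) else 0)
        + (if w = t.2.1 then (if G.Reachable v t.2.1 then t.2.2 else 0) else 0) := by
    intro w
    unfold bindTransfer
    by_cases h1 : w = t.1 <;> by_cases h2 : w = t.2.1 <;>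
      by_cases h3 : G.Reachable v w <;> subst_vars <;> simp_all <;> ring
  simp only [key, Finset.sum_add_distrib, Finset.sum_sub_distrib,
    Finset.sum_ite_eq' Finset.univ, Finset.mem_univ, if_true]
  rw [if_congr hr rfl rfl]
  ring

lemma compSum_foldl {V : Type*} [Fintype V] [DecidableEq V] (G : SimpleGraph V)
    (v : V) (ops : List (V × V × ℝ)) (hadj : ∀ t ∈ ops, G.Adj t.1 t.2.1) :
    ∀ b : V → ℝ, ∑ w : V, (if G.Reachable v w then (ops.foldl bindTransfer b) w else 0)
      = ∑ w : V, if G.Reachable v w then b w else 0 := by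
  induction ops with
  | nil => intro b; rfl
  | cons t rest ih =>
    intro b
    simp only [List.foldl_cons]
    rw [ih (fun t ht => hadj t (List.mem_cons_of_mem _ ht)) (bindTransfer b t),
      compSum_step G v b t (hadj t (List.mem_cons_self (a := t) (l := rest)))]

/-- Under bind-transfers along the edges of `G` that keep all balances
nonnegative, the final balance of any vertex `v` is bounded by the initial
total of its connected component; it is strictly below the global total when
positive balance exists outside the component; and if `G` is a perfect
matching then `v`'s balance is bounded by `b₀ v + b₀ w ≤ 2 · max b₀` where
`w` is matched to `v`. -/
theorem bind_transfer_capacity_bound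
    {V : Type*} [Fintype V] [DecidableEq V] (G : SimpleGraph V)
    (b₀ : V → ℝ) (h0 : ∀ w, 0 ≤ b₀ w)
    (ops : List (V × V × ℝ))
    (hadj : ∀ t ∈ ops, G.Adj t.1 t.2.1)
    (hnn : ∀ pre : List (V × V × ℝ), pre <+: ops →
      ∀ u : V, 0 ≤ (pre.foldl bindTransfer b₀) u) :
    ∀ v : V,
      ((ops.foldl bindTransfer b₀) v
          ≤ ∑ w : V, if G.Reachable v w then b₀ w else 0) ∧
      ((∃ w : V, ¬ G.Reachable v w ∧ 0 < b₀ w) →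
        (ops.foldl bindTransfer b₀) v < ∑ w : V, b₀ w) ∧
      (∀ w : V, (∀ u : V, ∃! u' : V, G.Adj u u') → G.Adj v w →
        (ops.foldl bindTransfer b₀) v ≤ b₀ v + b₀ w ∧
        b₀ v + b₀ w ≤ 2 * Finset.univ.sup' ⟨v, Finset.mem_univ v⟩ b₀) := by
  intro v
  set b := ops.foldl bindTransfer b₀ with hb
  have hfin : ∀ u, 0 ≤ b u := hnn ops (List.prefix_refl ops)
  have hmain : b v ≤ ∑ w : V, if G.Reachable v w then b₀ w else 0 := by
    rw [← compSum_foldl G v ops hadj b₀]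
    rw [show b v = (if G.Reachable v v then b v else 0) from
      (if_pos (SimpleGraph.Reachable.refl v)).symm]
    exact Finset.single_le_sum (f := fun w => if G.Reachable v w then b w else 0)
      (fun w _ => by by_cases h : G.Reachable v w <;> simp [h, hfin w]) (Finset.mem_univ v)
  refine ⟨hmain, ?_, ?_⟩
  · rintro ⟨w, hw, hwpos⟩
    refine lt_of_le_of_lt hmain ?_
    apply Finset.sum_lt_sum
    · intro u _; by_cases h : G.Reachable v u <;> simp [h, h0 u]
    · exact ⟨w, Finset.mem_univ w, by simp [hw, hwpos]⟩
  · intro w hm hvw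
    constructor
    · refine le_trans hmain ?_
      -- reachable set from v is {v, w}
      have hstep : ∀ u, (u = v ∨ u = w) → ∀ z, G.Adj u z → (z = v ∨ z = w) := by
        rintro u (rfl | rfl) z hz
        · right; exact ((hm u).unique hz hvw)
        · left; exact ((hm u).unique hz hvw.symm)
      have hreach : ∀ u, G.Reachable v u → (u = v ∨ u = w) := by
        intro u hu
        obtain ⟨p⟩ := hu
        have : ∀ {a u : V} (p : G.Walk a u), (a = v ∨ a = w) → (u = v ∨ u = w) := by
          intro a u p
          induction p with
          | nil => exact id
          | cons h' p ih => intro ha; exact ih (hstep _ ha _ h')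
        exact this p (Or.inl rfl)
      have hvne : v ≠ w := hvw.ne
      have : ∑ u : V, (if G.Reachable v u then b₀ u else 0)
          ≤ ∑ u : V, ((if u = v then b₀ v else 0) + (if u = w then b₀ w else 0)) := by
        apply Finset.sum_le_sum
        intro u _
        by_cases h : G.Reachable v u
        · rw [if_pos h]
          rcases hreach u h with rfl | rfl
          · simp [hvne]
          · simp [hvne.symm, h0]
        · rw [if_neg h]
          have := h0 v; have := h0 w
          split_ifs <;> linarith
      simpa [Finset.sum_add_distrib, Finset.sum_ite_eq' Finset.univ] using this
    · have h1 : b₀ v ≤ Finset.univ.sup' ⟨v, Finset.mem_univ v⟩ b₀ :=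
        Finset.le_sup' b₀ (Finset.mem_univ v)
      have h2 : b₀ w ≤ Finset.univ.sup' ⟨v, Finset.mem_univ v⟩ b₀ :=
        Finset.le_sup' b₀ (Finset.mem_univ w)
      linarith
end

section
/- Consider a Starfish merge state over a finite set I given by hub balances h : I \u2192 \u211d, user balances u : I \u2192 \u211d, and capacities cap : I \u2192 \u211d satisfying h i + u i = cap i for every i. For any finite sequence of merge updates applied successively: (a) every user balance u i is unchanged; (b) the hub's total balance \u03a3_{i\u2208I} h i is unchanged; and (c) the invariant h i + u i = cap i holds for every edge i in every intermediate state and in the final state. -/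
/-- A merge update `(i, j, x)` on a Starfish merge state `(h, u, cap)`
decreases both `cap i` and `h i` by `x` and increases both `cap j` and `h j`
by `x`, leaving all user balances and all other edges unchanged. -/
def mergeUpdate {I : Type*} [DecidableEq I]
    (s : (I → ℝ) × (I → ℝ) × (I → ℝ)) (t : I × I × ℝ) :
    (I → ℝ) × (I → ℝ) × (I → ℝ) :=
  (fun k => s.1 k - (if k = t.1 then t.2.2 else 0) + (if k = t.2.1 then t.2.2 else 0),
   s.2.1,
   fun k => s.2.2 k - (if k = t.1 then t.2.2 else 0) + (if k = t.2.1 then t.2.2 else 0))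

lemma mergeUpdate_users {I : Type*} [DecidableEq I]
    (l : List (I × I × ℝ)) (s : (I → ℝ) × (I → ℝ) × (I → ℝ)) :
    (l.foldl mergeUpdate s).2.1 = s.2.1 := by
  induction l generalizing s with
  | nil => rfl
  | cons a l ih => simpa [mergeUpdate] using ih (mergeUpdate s a)

lemma mergeUpdate_sum {I : Type*} [Fintype I] [DecidableEq I]
    (l : List (I × I × ℝ)) (s : (I → ℝ) × (I → ℝ) × (I → ℝ)) :
    ∑ i : I, (l.foldl mergeUpdate s).1 i = ∑ i : I, s.1 i := by
  induction l generalizing s with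
  | nil => rfl
  | cons a l ih =>
    rw [List.foldl_cons, ih]
    simp [mergeUpdate, Finset.sum_add_distrib, Finset.sum_sub_distrib]

lemma mergeUpdate_inv {I : Type*} [DecidableEq I]
    (l : List (I × I × ℝ)) (s : (I → ℝ) × (I → ℝ) × (I → ℝ))
    (hs : ∀ i, s.1 i + s.2.1 i = s.2.2 i) :
    ∀ i, (l.foldl mergeUpdate s).1 i + (l.foldl mergeUpdate s).2.1 i
      = (l.foldl mergeUpdate s).2.2 i := by
  induction l generalizing s with
  | nil => exact hs
  | cons a l ih =>
    refine ih (mergeUpdate s a) fun i => ?_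
    simp only [mergeUpdate]
    have := hs i
    ring_nf
    linarith

/-- Merge updates never change any user balance, preserve the hub's total
balance, and maintain the invariant `h i + u i = cap i` on every edge in all
intermediate states and in the final state. -/
theorem merge_updates_preserve_users_and_hub_total
    {I : Type*} [Fintype I] [DecidableEq I]
    (h u cap : I → ℝ) (hinv : ∀ i, h i + u i = cap i)
    (ops : List (I × I × ℝ)) (hops : ∀ t ∈ ops, t.1 ≠ t.2.1) :
    (∀ i : I, (ops.foldl mergeUpdate (h, u, cap)).2.1 i = u i) ∧
    (∑ i : I, (ops.foldl mergeUpdate (h, u, cap)).1 i = ∑ i : I, h i) ∧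
    (∀ pre : List (I × I × ℝ), pre <+: ops → ∀ i : I,
      (pre.foldl mergeUpdate (h, u, cap)).1 i
          + (pre.foldl mergeUpdate (h, u, cap)).2.1 i
        = (pre.foldl mergeUpdate (h, u, cap)).2.2 i) := by
  refine ⟨fun i => by rw [mergeUpdate_users], mergeUpdate_sum _ _,
    fun pre _ => mergeUpdate_inv pre (h, u, cap) hinv⟩
end

section
/- Define a Starfish system state as a triple (\u2113, C, E), where \u2113 : P \u2192 \u211d is the ledger over a finite party set P, C is a finite multiset of channel states (pairs (a, b) \u2208 \u211d\u00b2), and E is a finite multiset of edge states (pairs (h, u) \u2208 \u211d\u00b2). Define the total coin supply of a state as \u03a3_{p\u2208P} \u2113 p + \u03a3_{(a,b)\u2208C} (a + b) + \u03a3_{(h,u)\u2208E} (h + u). Consider the transition relation generated by the following operations: openChannel (subtract amounts a \u2265 0 and b \u2265 0 from two ledger entries and insert the channel (a, b) into C); updateChannel (replace a channel (a, b) \u2208 C by (a + x, b \u2212 x)); openMerge (replace a channel (a, b) \u2208 C with a \u2265 c by (a \u2212 c, b) and insert the edge (c, 0) into E); updateEdge (replace an edge (h, u) \u2208 E by (h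 + x, u \u2212 x)); updateMerge (replace two edges (h\u2081, u\u2081), (h\u2082, u\u2082) \u2208 E by (h\u2081 \u2212 x, u\u2081) and (h\u2082 + x, u\u2082)); closeMerge (remove an edge (h, u) from E and replace a channel (a, b) \u2208 C by (a + h, b + u)); closeChannel (remove a channel (a, b) from C and add a and b to two ledger entries). Then every single operation, and hence every finite sequence of operations, preserves the total coin supply of the state. -/
structure SysState (P : Type*) where
  ledger : P → ℝ
  channels : Multiset (ℝ × ℝ)
  edges : Multiset (ℝ × ℝ)

noncomputable def SysState.total {P : Type*} [Fintype P] (s : SysState P) : ℝ :=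
  (∑ p : P, s.ledger p)
    + (s.channels.map fun c => c.1 + c.2).sum
    + (s.edges.map fun e => e.1 + e.2).sum

inductive SysStep {P : Type*} [DecidableEq P] : SysState P → SysState P → Prop
  | openChannel (s : SysState P) (p q : P) (a b : ℝ) (ha : 0 ≤ a) (hb : 0 ≤ b) :
      SysStep s ⟨fun r => s.ledger r - (if r = p then a else 0) - (if r = q then b else 0),
                 (a, b) ::ₘ s.channels, s.edges⟩
  | updateChannel (s : SysState P) (a b x : ℝ) (h : (a, b) ∈ s.channels) :
      SysStep s ⟨s.ledger, (a + x, b - x) ::ₘ s.channels.erase (a, b), s.edges⟩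
  | openMerge (s : SysState P) (a b c : ℝ) (h : (a, b) ∈ s.channels) (hc : c ≤ a) :
      SysStep s ⟨s.ledger, (a - c, b) ::ₘ s.channels.erase (a, b), (c, 0) ::ₘ s.edges⟩
  | updateEdge (s : SysState P) (h u x : ℝ) (he : (h, u) ∈ s.edges) :
      SysStep s ⟨s.ledger, s.channels, (h + x, u - x) ::ₘ s.edges.erase (h, u)⟩
  | updateMerge (s : SysState P) (h₁ u₁ h₂ u₂ x : ℝ)
      (he₁ : (h₁, u₁) ∈ s.edges) (he₂ : (h₂, u₂) ∈ s.edges.erase (h₁, u₁)) :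
      SysStep s ⟨s.ledger, s.channels,
                 (h₁ - x, u₁) ::ₘ (h₂ + x, u₂) ::ₘ (s.edges.erase (h₁, u₁)).erase (h₂, u₂)⟩
  | closeMerge (s : SysState P) (h u a b : ℝ)
      (he : (h, u) ∈ s.edges) (hc : (a, b) ∈ s.channels) :
      SysStep s ⟨s.ledger, (a + h, b + u) ::ₘ s.channels.erase (a, b), s.edges.erase (h, u)⟩
  | closeChannel (s : SysState P) (p q : P) (a b : ℝ) (h : (a, b) ∈ s.channels) :
      SysStep s ⟨fun r => s.ledger r + (if r = p then a else 0) + (if r = q then b else 0),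
                 s.channels.erase (a, b), s.edges⟩

/-- Every single Starfish operation, and hence every finite sequence of
operations, preserves the total coin supply of the system state. -/
theorem starfish_preserves_total_supply
    {P : Type*} [Fintype P] [DecidableEq P] :
    (∀ s s' : SysState P, SysStep s s' → s'.total = s.total) ∧
    (∀ s s' : SysState P, Relation.ReflTransGen SysStep s s' → s'.total = s.total) := by
  have key : ∀ s s' : SysState P, SysStep s s' → s'.total = s.total := by
    intro s s' hstep
    cases hstep with
    | openChannel p q a b ha hb =>
        simp only [SysState.total, Multiset.map_cons, Multiset.sum_cons,
          Finset.sum_sub_distrib, Finset.sum_ite_eq', Finset.mem_univ, if_true]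
        ring
    | updateChannel a b x h =>
        conv_rhs => rw [SysState.total, ← Multiset.cons_erase h]
        simp only [SysState.total, Multiset.map_cons, Multiset.sum_cons]
        ring
    | openMerge a b c h hc =>
        conv_rhs => rw [SysState.total, ← Multiset.cons_erase h]
        simp only [SysState.total, Multiset.map_cons, Multiset.sum_cons]
        ring
    | updateEdge h u x he =>
        conv_rhs => rw [SysState.total, ← Multiset.cons_erase he]
        simp only [SysState.total, Multiset.map_cons, Multiset.sum_cons]
        ring
    | updateMerge h₁ u₁ h₂ u₂ x he₁ he₂ =>
        conv_rhs => rw [SysState.total, ← Multiset.cons_erase he₁, ← Multiset.cons_erase he₂]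
        simp only [SysState.total, Multiset.map_cons, Multiset.sum_cons]
        ring
    | closeMerge h u a b he hc =>
        conv_rhs => rw [SysState.total, ← Multiset.cons_erase hc,
          show s.edges.map (fun e => e.1 + e.2) = ((h,u) ::ₘ s.edges.erase (h,u)).map (fun e => e.1 + e.2)
            from by rw [Multiset.cons_erase he]]
        simp only [SysState.total, Multiset.map_cons, Multiset.sum_cons]
        ring
    | closeChannel p q a b h =>
        conv_rhs => rw [SysState.total, show s.channels.map (fun c => c.1 + c.2)
          = ((a,b) ::ₘ s.channels.erase (a,b)).map (fun c => c.1 + c.2)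
            from by rw [Multiset.cons_erase h]]
        simp only [SysState.total, Multiset.map_cons, Multiset.sum_cons,
          Finset.sum_add_distrib, Finset.sum_ite_eq', Finset.mem_univ, if_true]
        ring
  refine ⟨key, fun s s' h => ?_⟩
  induction h with
  | refl => rfl
  | tail _ hstep ih => rw [key _ _ hstep, ih]
end

section
/- Consider a Starfish merge state over a finite nonempty set I of edges given by hub balances h : I \u2192 \u211d and user balances u : I \u2192 \u211d, all nonnegative, with edge capacities cap i = h i + u i. Fix an edge j \u2208 I and an amount a with 0 \u2264 a \u2264 \u03a3_{i\u2208I} h i. Then there exists a finite sequence of operations, each of which is either (i) a merge update with a nonnegative transfer amount not exceeding the current hub balance of its source edge, or (ii) an edge payment on edge j by the hub of a nonnegative amount not exceeding the current hub balance of edge j (decreasing h j and increasing u j by that amount), such that all hub and user balances remain nonnegative throughout and the total amount paid by the hub to the user of edge j over the whole sequence equals a. In particular, the hub's entire merged balance \u03a3_{i\u2208I} h i, and not merely its single-edge balance h j, is available for payments to any one counterparty. -/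
/-- An operation on a Starfish merge state, either a merge update
`mu i i' x` transferring capacity `x` from edge `i` to edge `i'` (moving the
hub balance along with it), or an edge payment `pay y` by the hub to the
user of a fixed designated edge. -/
inductive StarfishOp (I : Type*) where
  | mu : I → I → ℝ → StarfishOp I
  | pay : ℝ → StarfishOp I

/-- Applying an operation to the state `(h, u)` of hub and user balances,
where edge payments happen on the designated edge `j`. -/
noncomputable def applyStarfishOp {I : Type*} [DecidableEq I] (j : I)
    (s : (I → ℝ) × (I → ℝ)) : StarfishOp I → (I → ℝ) × (I → ℝ)
  | .mu i i' x =>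
      (fun k => s.1 k - (if k = i then x else 0) + (if k = i' then x else 0), s.2)
  | .pay y =>
      (Function.update s.1 j (s.1 j - y), Function.update s.2 j (s.2 j + y))

/-- The amount paid by the hub to the user of the designated edge by one
operation. -/
def StarfishOp.paid {I : Type*} : StarfishOp I → ℝ
  | .mu _ _ _ => 0
  | .pay y => y

lemma fold_merges {I : Type*} [DecidableEq I] (j : I) (v : I → ℝ) :
    ∀ (L : List I), j ∉ L → L.Nodup → ∀ (h u : I → ℝ),
    ((L.map (fun i => StarfishOp.mu i j (v i))).foldl (applyStarfishOp j) (h, u))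
      = (fun k => h k - (if k ∈ L then v k else 0)
          + (if k = j then (L.map v).sum else 0), u) := by
  intro L
  induction L with
  | nil => intro _ _ h u; simp
  | cons i L' ih =>
    intro hj hnd h u
    simp only [List.mem_cons, not_or] at hj
    obtain ⟨hij, hjL⟩ := hj
    rw [List.nodup_cons] at hnd
    simp only [List.map_cons, List.foldl_cons]
    show ((L'.map (fun i => StarfishOp.mu i j (v i))).foldl (applyStarfishOp j)
      (applyStarfishOp j (h, u) (StarfishOp.mu i j (v i)))) = _
    rw [show applyStarfishOp j (h, u) (StarfishOp.mu i j (v i))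
      = (fun k => h k - (if k = i then v i else 0) + (if k = j then v i else 0), u) from rfl]
    rw [ih hjL hnd.2]
    refine Prod.ext (funext fun k => ?_) rfl
    simp only [List.mem_cons, List.map_cons, List.sum_cons]
    by_cases hk1 : k = i
    · subst hk1
      have hkL : k ∉ L' := hnd.1
      have hkj : k ≠ j := fun e => hij e.symm
      simp [hkL, hkj]
    · by_cases hk2 : k = j
      · subst hk2
        simp [hk1, hjL, fun e => hk1 e]
        ring
      · simp [hk1, hk2]

lemma not_mem_take_self {α : Type*} {l : List α} (hnd : l.Nodup) (k : ℕ) (hk : k < l.length) :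
    l[k] ∉ l.take k := by
  intro hmem
  have hsplit := List.take_append_drop k l
  rw [← hsplit] at hnd
  have hdis := List.disjoint_of_nodup_append hnd
  apply hdis hmem
  have h0 : 0 < (l.drop k).length := by simp; omega
  have : l[k] = (l.drop k)[0]'h0 := by simp
  rw [this]
  exact List.getElem_mem _

/-- After merging, the hub's entire merged balance `∑ i, h i`, and not merely
its single-edge balance `h j`, is available for payments to the user of any
one edge `j`: for every amount `a` with `0 ≤ a ≤ ∑ i, h i` there is a finite
sequence of valid merge updates and edge payments on `j`, keeping all
balances nonnegative throughout, whose total payment to the user of `j`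
equals `a`. -/
theorem hub_can_pay_total_merged_balance
    {I : Type*} [Fintype I] [DecidableEq I]
    (h u : I → ℝ) (hh : ∀ i, 0 ≤ h i) (hu : ∀ i, 0 ≤ u i)
    (j : I) (a : ℝ) (ha0 : 0 ≤ a) (ha : a ≤ ∑ i : I, h i) :
    ∃ ops : List (StarfishOp I),
      (∀ k : Fin ops.length,
        match ops.get k with
        | .mu i i' x =>
            i ≠ i' ∧ 0 ≤ x ∧
              x ≤ ((ops.take k).foldl (applyStarfishOp j) (h, u)).1 i
        | .pay y =>
            0 ≤ y ∧ y ≤ ((ops.take k).foldl (applyStarfishOp j) (h, u)).1 j) ∧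
      (∀ pre : List (StarfishOp I), pre <+: ops → ∀ i : I,
        0 ≤ (pre.foldl (applyStarfishOp j) (h, u)).1 i ∧
        0 ≤ (pre.foldl (applyStarfishOp j) (h, u)).2 i) ∧
      (ops.map StarfishOp.paid).sum = a := by
  classical
  set L : List I := (Finset.univ.erase j).toList with hL
  have hjL : j ∉ L := by simp [hL]
  have hnd : L.Nodup := Finset.nodup_toList _
  have htot : h j + (L.map h).sum = ∑ i : I, h i := by
    rw [hL, Finset.sum_map_toList]
    exact Finset.add_sum_erase _ h (Finset.mem_univ j)
  set A : List (StarfishOp I) := L.map (fun i => StarfishOp.mu i j (h i)) with hA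
  have hAlen : A.length = L.length := by simp [hA]
  have hstate : ∀ n, ((A.take n).foldl (applyStarfishOp j) (h, u))
      = (fun k => h k - (if k ∈ L.take n then h k else 0)
          + (if k = j then ((L.take n).map h).sum else 0), u) := by
    intro n
    rw [hA, ← List.map_take]
    exact fold_merges j h (L.take n)
      (fun m => hjL (List.mem_of_mem_take m))
      (hnd.sublist (List.take_sublist _ _)) h u
  have hsumnn : ∀ n, 0 ≤ ((L.take n).map h).sum := by
    intro n
    apply List.sum_nonneg
    intro x hx
    obtain ⟨i, _, rfl⟩ := List.mem_map.mp hx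
    exact hh i
  refine ⟨A ++ [.pay a], ?_, ?_, ?_⟩
  · intro k
    have hklen : (k : ℕ) < L.length + 1 := by
      have := k.isLt; simpa [hA] using this
    rcases lt_or_eq_of_le (Nat.lt_succ_iff.mp hklen) with hlt | heq
    · -- merge op
      have hget : (A ++ [StarfishOp.pay a]).get k
          = StarfishOp.mu (L[(k : ℕ)]'hlt) j (h (L[(k : ℕ)]'hlt)) := by
        rw [List.get_eq_getElem, List.getElem_append_left (by omega : (k : ℕ) < A.length)]
        simp [hA]
      rw [hget]
      have htake : (A ++ [StarfishOp.pay a]).take (k : ℕ) = A.take (k : ℕ) :=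
        List.take_append_of_le_length (by omega)
      refine ⟨fun e => hjL (e ▸ List.getElem_mem _), hh _, ?_⟩
      rw [htake, hstate]
      have h1 : L[(k : ℕ)]'hlt ∉ L.take (k : ℕ) := not_mem_take_self hnd _ hlt
      have h2 : L[(k : ℕ)]'hlt ≠ j := fun e => hjL (e ▸ List.getElem_mem _)
      simp [h1, h2]
    · -- pay op
      have hget : (A ++ [StarfishOp.pay a]).get k = StarfishOp.pay a := by
        rw [List.get_eq_getElem, List.getElem_append_right (by omega : A.length ≤ (k : ℕ))]
        simp
      rw [hget]
      have htake : (A ++ [StarfishOp.pay a]).take (k : ℕ) = A := by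
        rw [← heq] at hAlen
        rw [← hAlen]
        exact List.take_left
      refine ⟨ha0, ?_⟩
      rw [htake, ← List.take_length (l := A), hstate]
      simp only [hAlen, List.take_length]
      simp [hjL]
      linarith [htot]
  · intro pre hpre i
    have hpl : pre = (A ++ [StarfishOp.pay a]).take pre.length :=
      List.prefix_iff_eq_take.mp hpre
    have hlen : pre.length ≤ L.length + 1 := by
      have := hpre.length_le; simpa [hA] using this
    rcases lt_or_eq_of_le hlen with hlt | heq
    · have htake : (A ++ [StarfishOp.pay a]).take pre.length = A.take pre.length :=
        List.take_append_of_le_length (by omega)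
      rw [hpl, htake, hstate]
      refine ⟨?_, hu i⟩
      dsimp only
      split_ifs <;> linarith [hsumnn pre.length, hh i]
    · have htake : (A ++ [StarfishOp.pay a]).take pre.length = A ++ [StarfishOp.pay a] :=
        List.take_of_length_le (by simp [hA]; omega)
      have hAst : (A.foldl (applyStarfishOp j) (h, u))
          = (fun k => h k - (if k ∈ L then h k else 0)
              + (if k = j then (L.map h).sum else 0), u) := by
        have hs := hstate A.length
        rw [List.take_length, hAlen, List.take_length] at hs
        exact hs
      rw [hpl, htake, List.foldl_append, hAst]
      simp only [List.foldl_cons, List.foldl_nil, applyStarfishOp]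
      by_cases hij : i = j
      · subst hij
        rw [Function.update_self, Function.update_self]
        refine ⟨?_, by linarith [hu i]⟩
        simp only [if_neg hjL, eq_self_iff_true, if_true]
        linarith
      · rw [Function.update_of_ne hij, Function.update_of_ne hij]
        refine ⟨?_, hu i⟩
        split_ifs <;> linarith [hh i, List.sum_nonneg (l := L.map h)
          (fun x hx => by obtain ⟨m, _, rfl⟩ := List.mem_map.mp hx; exact hh m)]
  · have : ∀ M : List I, ((M.map (fun i => StarfishOp.mu i j (h i))).map StarfishOp.paid).sum = 0 := by
      intro M
      induction M with
      | nil => simp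
      | cons x xs ih => simpa [StarfishOp.paid] using ih
    rw [hA, List.map_append, List.sum_append, this L]
    simp [StarfishOp.paid]
end
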